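/- Given any two lines l and m, the set φ(l,m) = {l, m} ∪ {n : l×m exists and passes through n, i.e., l and m intersect at a point lying on n} ∪ {n : n ∥ l and l ∥ m} is a complete pencil containing l and m. -/
import Mathlib


/-- An incidence plane: points, lines, and an incidence relation. -/
structure IncidencePlane where
  Point : Type
  Line : Type
  mem : Point → Line → Prop

namespace IncidencePlane

variable (G : IncidencePlane)

/-- Lines `l` and `m` intersect: they are distinct and have a common point. -/
def Intersect (l m : G.Line) : Prop := l ≠ m ∧ ∃ Q, G.mem Q l ∧ G.mem Q m

/-- Parallel is the negation of intersecting. -/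
def Par (l m : G.Line) : Prop := ¬ G.Intersect l m

/-- The point set of a line. -/
def lineSet (l : G.Line) : Set G.Point := {Q | G.mem Q l}

/-- The pencil of all lines through a point `Q`, written `Q*`. -/
def pointPencil (Q : G.Point) : Set G.Line := {l | G.mem Q l}

/-- The pencil of all lines parallel to `l`, written `l*`. -/
def parPencil (l : G.Line) : Set G.Line := {m | G.Par m l}

/-- A regular pencil has the form `Q*` or `l*`. -/
def Regular (ρ : Set G.Line) : Prop :=
  (∃ Q, ρ = G.pointPencil Q) ∨ (∃ l, ρ = G.parPencil l)

/-- A pencil: (1) it cannot contain fewer than two lines; (2) two distinct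
lines of it lying in a regular pencil `ρ` force inclusion in `ρ`. -/
def IsPencil (α : Set G.Line) : Prop :=
  (¬ ∀ l ∈ α, ∀ m ∈ α, l = m) ∧
  (∀ ρ : Set G.Line, G.Regular ρ → ∀ l ∈ α, ∀ m ∈ α, l ≠ m → l ∈ ρ → m ∈ ρ → α ⊆ ρ)

/-- A complete pencil: two distinct lines of it in a regular pencil `ρ` force equality with `ρ`. -/
def Complete (α : Set G.Line) : Prop :=
  ∀ ρ : Set G.Line, G.Regular ρ → ∀ l ∈ α, ∀ m ∈ α, l ≠ m → l ∈ ρ → m ∈ ρ → α = ρ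

/-- A strictly complete pencil: contained in a regular pencil implies equal to it. -/
def StrictlyComplete (α : Set G.Line) : Prop :=
  ∀ ρ : Set G.Line, G.Regular ρ → α ⊆ ρ → α = ρ

/-- `l` lies outside the family `α`: it differs from every line of `α`. -/
def LineOutside (l : G.Line) (α : Set G.Line) : Prop := ∀ m ∈ α, l ≠ m

/-- Pencils `α` and `β` are distinct: some line of one lies outside the other. -/
def PDistinct (α β : Set G.Line) : Prop :=
  (∃ l ∈ α, G.LineOutside l β) ∨ (∃ l ∈ β, G.LineOutside l α)

/-- Pencils are equivalent when they are contained in exactly the same regular pencils. -/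
def PEquiv (α β : Set G.Line) : Prop :=
  ∀ ρ : Set G.Line, G.Regular ρ → (α ⊆ ρ ↔ β ⊆ ρ)

/-- A parallel pencil: a pencil any two of whose lines are parallel. -/
def ParallelPencil (α : Set G.Line) : Prop :=
  G.IsPencil α ∧ ∀ l ∈ α, ∀ m ∈ α, G.Par l m

/-- Point `Q` lies outside line `l`: it differs from every point of `l`. -/
def PointOutside (Q : G.Point) (l : G.Line) : Prop := ∀ R, G.mem R l → Q ≠ R

/-- The union of all pencils equivalent to `α` (the full pencil `α'`). -/
def fullPencil (α : Set G.Line) : Set G.Line :=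
  ⋃₀ {β | G.IsPencil β ∧ G.PEquiv β α}

/-- The core of two pencils: points lying on a common line of the two pencils. -/
def core (α β : Set G.Line) : Set G.Point :=
  {Q | ∃ l, l ∈ α ∩ β ∧ G.mem Q l}

/-- A virtual line: a set of points which is a line whenever it is inhabited. -/
def VLine (p : Set G.Point) : Prop :=
  p.Nonempty → ∃ l : G.Line, p = G.lineSet l

/-- Distinctness of virtual lines. -/
def VDistinct (p q : Set G.Point) : Prop :=
  ¬ (p = q) ∧ ∀ l m : G.Line, p = G.lineSet l → q = G.lineSet m → l ≠ m

/-- Equivalence of virtual lines: the negation of distinctness. -/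
def VEquiv (p q : Set G.Point) : Prop := ¬ G.VDistinct p q

/-- The union of all virtual lines equivalent to `p`. -/
def vfull (p : Set G.Point) : Set G.Point :=
  ⋃₀ {q | G.VLine q ∧ G.VEquiv q p}

/-- The axioms of an incidence plane used in this paper. -/
structure Axioms (G : IncidencePlane) : Prop where
  join : ∀ Q R : G.Point, Q ≠ R → ∃ l, G.mem Q l ∧ G.mem R l
  join_unique : ∀ Q R : G.Point, Q ≠ R → ∀ l m : G.Line,
      G.mem Q l → G.mem R l → G.mem Q m → G.mem R m → l = m
  cross_unique : ∀ l m : G.Line, l ≠ m → ∀ Q R : G.Point,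
      G.mem Q l → G.mem Q m → G.mem R l → G.mem R m → Q = R
  parPost : ∀ (Q : G.Point) (l : G.Line), ∃ n, G.mem Q n ∧ G.Par n l
  parPost_unique : ∀ (Q : G.Point) (l : G.Line) (n n' : G.Line),
      G.mem Q n → G.Par n l → G.mem Q n' → G.Par n' l → n = n'
  par_int : ∀ n₁ n₂ l m : G.Line,
      G.Par n₁ l → G.Par n₂ m → G.Intersect l m → G.Intersect n₁ n₂
  not_pointOutside : ∀ (Q : G.Point) (l : G.Line), ¬ G.PointOutside Q l → G.mem Q l
  two_points : ∀ l : G.Line, ∃ Q R : G.Point, Q ≠ R ∧ G.mem Q l ∧ G.mem R l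
  exists_intersecting : ∃ l m : G.Line, G.Intersect l m

end IncidencePlane

open IncidencePlane

section Aux

variable {G : IncidencePlane}

lemma par_refl (a : G.Line) : G.Par a a := fun h => h.1 rfl

lemma par_symm {a b : G.Line} (h : G.Par a b) : G.Par b a := by
  intro ⟨hne, Q, h1, h2⟩; exact h ⟨hne.symm, Q, h2, h1⟩

lemma par_trans (ax : G.Axioms) {a b c : G.Line} (hab : G.Par a b) (hbc : G.Par b c) :
    G.Par a c := by
  intro ⟨hne, Q, h1, h2⟩
  exact hne (ax.parPost_unique Q b a c h1 hab h2 (par_symm hbc))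

lemma parPencil_eq (ax : G.Axioms) {a b : G.Line} (hab : G.Par a b) :
    G.parPencil a = G.parPencil b := by
  ext n
  exact ⟨fun h => par_trans ax h hab, fun h => par_trans ax h (par_symm hab)⟩

lemma exists_point_off (ax : G.Axioms) (l : G.Line) : ∃ P, ¬ G.mem P l := by
  by_contra h
  push_neg at h
  obtain ⟨l₁, l₂, hne, P, hP1, hP2⟩ := ax.exists_intersecting
  obtain ⟨Q, R, hQR, hQ1, hR1⟩ := ax.two_points l₁
  obtain ⟨Q', R', hQR', hQ2, hR2⟩ := ax.two_points l₂
  have e1 : l₁ = l := ax.join_unique Q R hQR l₁ l hQ1 hR1 (h Q) (h R)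
  have e2 : l₂ = l := ax.join_unique Q' R' hQR' l₂ l hQ2 hR2 (h Q') (h R')
  exact hne (e1.trans e2.symm)

lemma complete_parPencil (ax : G.Axioms) (l : G.Line) : G.Complete (G.parPencil l) := by
  intro ρ hρ a ha b hb hab haρ hbρ
  rcases hρ with ⟨Q, rfl⟩ | ⟨k, rfl⟩
  · exact absurd (ax.parPost_unique Q l a b haρ ha hbρ hb) hab
  · exact parPencil_eq ax (par_trans ax (par_symm ha) haρ)

lemma complete_pointPencil (ax : G.Axioms) (Q : G.Point) : G.Complete (G.pointPencil Q) := by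
  intro ρ hρ a ha b hb hab haρ hbρ
  rcases hρ with ⟨R, rfl⟩ | ⟨k, rfl⟩
  · by_cases hQR : Q = R
    · rw [hQR]
    · exact absurd (ax.join_unique Q R hQR a b ha haρ hb hbρ) hab
  · exact absurd (ax.parPost_unique Q k a b ha haρ hb hbρ) hab

lemma nontriv_pointPencil (ax : G.Axioms) (Q : G.Point) :
    ¬ ∀ a ∈ G.pointPencil Q, ∀ b ∈ G.pointPencil Q, a = b := by
  intro h
  obtain ⟨l₁, _, _⟩ := ax.exists_intersecting
  obtain ⟨n, hQn, _⟩ := ax.parPost Q l₁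
  obtain ⟨S, hS⟩ := exists_point_off ax n
  have hSQ : S ≠ Q := fun e => hS (e ▸ hQn)
  obtain ⟨b, hSb, hQb⟩ := ax.join S Q hSQ
  have : n = b := h n hQn b hQb
  exact hS (this ▸ hSb)

lemma nontriv_parPencil (ax : G.Axioms) (l : G.Line) :
    ¬ ∀ a ∈ G.parPencil l, ∀ b ∈ G.parPencil l, a = b := by
  intro h
  obtain ⟨P, hP⟩ := exists_point_off ax l
  obtain ⟨n, hPn, hnl⟩ := ax.parPost P l
  have hln : G.Par l l := par_refl l
  have : n = l := h n hnl l hln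
  exact hP (this ▸ hPn)

lemma isPencil_of_complete {α : Set G.Line} (h : G.Complete α)
    (hnt : ¬ ∀ a ∈ α, ∀ b ∈ α, a = b) : G.IsPencil α := by
  refine ⟨hnt, fun ρ hρ a ha b hb hab haρ hbρ => ?_⟩
  exact (h ρ hρ a ha b hb hab haρ hbρ).le

end Aux

/-- φ(l,m) is a complete pencil containing l and m. -/
theorem phi_complete_pencil (G : IncidencePlane) (ax : G.Axioms) (l m : G.Line) :
    G.IsPencil ({l, m} ∪
        {n | ∃ Q : G.Point, l ≠ m ∧ G.mem Q l ∧ G.mem Q m ∧ G.mem Q n} ∪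
        {n | G.Par n l ∧ G.Par l m}) ∧
    G.Complete ({l, m} ∪
        {n | ∃ Q : G.Point, l ≠ m ∧ G.mem Q l ∧ G.mem Q m ∧ G.mem Q n} ∪
        {n | G.Par n l ∧ G.Par l m}) ∧
    l ∈ ({l, m} ∪
        {n | ∃ Q : G.Point, l ≠ m ∧ G.mem Q l ∧ G.mem Q m ∧ G.mem Q n} ∪
        {n | G.Par n l ∧ G.Par l m}) ∧
    m ∈ ({l, m} ∪
        {n | ∃ Q : G.Point, l ≠ m ∧ G.mem Q l ∧ G.mem Q m ∧ G.mem Q n} ∪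
        {n | G.Par n l ∧ G.Par l m}) := by
  set φ := ({l, m} ∪
        {n | ∃ Q : G.Point, l ≠ m ∧ G.mem Q l ∧ G.mem Q m ∧ G.mem Q n} ∪
        {n | G.Par n l ∧ G.Par l m}) with hφ
  have hl : l ∈ φ := Or.inl (Or.inl (Or.inl rfl))
  have hm : m ∈ φ := Or.inl (Or.inl (Or.inr rfl))
  have key : (∃ Q, φ = G.pointPencil Q) ∨ φ = G.parPencil l := by
    by_cases hlm : l = m
    · right
      subst hlm
      ext n
      constructor
      · rintro (((rfl | rfl) | ⟨Q, hne, _⟩) | ⟨h1, _⟩)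
        · exact par_refl _
        · exact par_refl _
        · exact absurd rfl hne
        · exact h1
      · intro h
        exact Or.inr ⟨h, par_refl l⟩
    · by_cases hint : ∃ Q, G.mem Q l ∧ G.mem Q m
      · obtain ⟨Q, hQl, hQm⟩ := hint
        left; refine ⟨Q, ?_⟩
        have hInt : G.Intersect l m := ⟨hlm, Q, hQl, hQm⟩
        ext n
        constructor
        · rintro (((rfl | rfl) | ⟨R, _, hRl, hRm, hRn⟩) | ⟨_, h2⟩)
          · exact hQl
          · exact hQm
          · exact (ax.cross_unique l m hlm Q R hQl hQm hRl hRm) ▸ hRn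
          · exact absurd hInt h2
        · intro h
          exact Or.inl (Or.inr ⟨Q, hlm, hQl, hQm, h⟩)
      · right
        have hpar : G.Par l m := by
          rintro ⟨_, Q, h1, h2⟩; exact hint ⟨Q, h1, h2⟩
        ext n
        constructor
        · rintro (((rfl | rfl) | ⟨Q, _, h1, h2, _⟩) | ⟨h1, _⟩)
          · exact par_refl _
          · exact par_symm hpar
          · exact (hint ⟨Q, h1, h2⟩).elim
          · exact h1
        · intro h
          exact Or.inr ⟨h, hpar⟩
  have hcomp : G.Complete φ ∧ G.IsPencil φ := by
    rcases key with ⟨Q, hQ⟩ | hP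
    · rw [hQ]
      exact ⟨complete_pointPencil ax Q,
        isPencil_of_complete (complete_pointPencil ax Q) (nontriv_pointPencil ax Q)⟩
    · rw [hP]
      exact ⟨complete_parPencil ax l,
        isPencil_of_complete (complete_parPencil ax l) (nontriv_parPencil ax l)⟩
  exact ⟨hcomp.2, hcomp.1, hl, hm⟩
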